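/- arXiv:1512.02442 — 5 statements merged into one kernel-verified Lean document; each statement's English description precedes it below -/
import Mathlib

section
/- Let F : mod(B) → mod(A) be a weakly homological embedding between module categories of finite dimensional algebras whose essential image Im(F) is closed under subobjects in mod(A). Then Im(F) is closed under quotients in mod(A). -/
open CategoryTheory Limits Opposite

universe u

noncomputable section

variable (K : Type u) [Field K]

/-- The `n`-th Ext group of two `A`-modules, as a `K`-vector space, computed in the
category of all `A`-modules (for finite dimensional modules this agrees with the
Ext groups computed in the category of finite dimensional modules). -/
abbrev ExtGrp (A : Type u) [Ring A] [Algebra K A] (n : ℕ) (X Y : ModuleCat.{u} A) :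
    ModuleCat.{u} K :=
  ((Ext K (ModuleCat.{u} A) n).obj (op X)).obj Y

/-- The category `mod A` of finite dimensional `A`-modules: since `A` is a finite
dimensional `K`-algebra, these are exactly the finitely generated `A`-modules. -/
abbrev fdMod (A : Type u) [Ring A] [Algebra K A] :=
  ObjectProperty.FullSubcategory (fun M : ModuleCat.{u} A => Module.Finite A M)

variable {K} in
/-- A morphism in `fdMod K A`, viewed as a morphism of the underlying modules. -/
abbrev fdHom {A : Type u} [Ring A] [Algebra K A] {X Y : fdMod K A} (f : X ⟶ Y) :
    X.obj ⟶ Y.obj := f.hom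

variable {K} in
/-- A functor between categories of finite dimensional modules is exact if it preserves
short exact sequences. -/
def IsExactFunctor {A B : Type u} [Ring A] [Algebra K A] [Ring B] [Algebra K B]
    (F : fdMod K A ⥤ fdMod K B) : Prop :=
  ∀ (X Y Z : fdMod K A) (f : X ⟶ Y) (g : Y ⟶ Z),
    Function.Injective (fdHom f) → Function.Exact (fdHom f) (fdHom g) →
      Function.Surjective (fdHom g) →
      Function.Injective (fdHom (F.map f)) ∧
        Function.Exact (fdHom (F.map f)) (fdHom (F.map g)) ∧
          Function.Surjective (fdHom (F.map g))

set_option maxHeartbeats 1000000 in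
/-- If the essential image of a weakly homological embedding
`F : mod B → mod A` is closed under subobjects in `mod A` (every module embedding
into a module in the image is again in the image), then it is closed under quotients
(every quotient of a module in the image is in the image). -/
theorem essImage_closed_subobjects_imp_closed_quotients [IsAlgClosed K]
    (A B : Type u) [Ring A] [Algebra K A] [FiniteDimensional K A]
    [Ring B] [Algebra K B] [FiniteDimensional K B]
    (F : fdMod K B ⥤ fdMod K A) (hfull : F.Full) (hfaithful : F.Faithful)
    (hexact : IsExactFunctor F)
    (hext1 : ∀ X Y : fdMod K B,
      Nonempty (ExtGrp K B 1 X.obj Y.obj ≅ ExtGrp K A 1 (F.obj X).obj (F.obj Y).obj))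
    (hsub : ∀ (M N : fdMod K A), F.essImage M →
      (∃ i : N.obj ⟶ M.obj, Function.Injective i) → F.essImage N) :
    ∀ (M N : fdMod K A), F.essImage M →
      (∃ p : M.obj ⟶ N.obj, Function.Surjective p) → F.essImage N := by
  haveI := hfull
  haveI : IsNoetherianRing A := isNoetherianRing_iff.mpr (isNoetherian_of_tower K inferInstance)
  haveI : IsNoetherianRing B := isNoetherianRing_iff.mpr (isNoetherian_of_tower K inferInstance)
  have hbij : ∀ {C : Type u} [inst : Ring C] [inst2 : Algebra K C] {X Y : fdMod K C}
      (e : X ≅ Y), Function.Bijective (fdHom e.hom) := by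
    intro C _ _ X Y e
    exact ConcreteCategory.bijective_of_isIso ((ObjectProperty.ι _).map e.hom)
  intro M N hM hp
  obtain ⟨p, hpsurj⟩ := hp
  obtain ⟨X, ⟨e⟩⟩ := hM
  -- the surjection from F.obj X onto N
  obtain ⟨p', hp'surj⟩ : ∃ p' : (F.obj X).obj →ₗ[A] N.obj, Function.Surjective p' := by
    refine ⟨(fdHom e.hom ≫ p).hom, ?_⟩
    have : Function.Surjective (fun x => p (fdHom e.hom x)) :=
      hpsurj.comp (hbij e).2
    intro n
    obtain ⟨m, hm⟩ := this n
    exact ⟨m, hm⟩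
  -- the kernel of p', as an object of fdMod K A
  haveI := (F.obj X).property
  haveI hKfin : Module.Finite A (LinearMap.ker p') :=
    Module.Finite.iff_fg.mpr (IsNoetherian.noetherian _)
  let Kfd : fdMod K A := ⟨ModuleCat.of A (LinearMap.ker p'), hKfin⟩
  have hKim : F.essImage Kfd :=
    hsub (F.obj X) Kfd ⟨X, ⟨Iso.refl _⟩⟩
      ⟨(ModuleCat.ofHom (LinearMap.ker p').subtype : Kfd.obj ⟶ (F.obj X).obj),
        Submodule.injective_subtype _⟩
  obtain ⟨Y, ⟨e2⟩⟩ := hKim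
  let incl : Kfd ⟶ F.obj X := ⟨ModuleCat.ofHom (LinearMap.ker p').subtype⟩
  obtain ⟨f, hFf⟩ : ∃ f : Y ⟶ X, F.map f = e2.hom ≫ incl :=
    ⟨F.preimage (e2.hom ≫ incl), F.map_preimage _⟩
  have hcomp : ∀ x, fdHom (F.map f) x = (LinearMap.ker p').subtype (fdHom e2.hom x) := by
    intro x; rw [hFf]; rfl
  -- injectivity of F.map f
  have hFfinj : Function.Injective (fdHom (F.map f)) := by
    intro a b hab
    rw [hcomp a, hcomp b] at hab
    exact (hbij e2).1 (Submodule.injective_subtype _ hab)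
  -- the trivial object of fdMod K B and triviality of its image
  let O : fdMod K B := ⟨ModuleCat.of B PUnit, inferInstance⟩
  haveI hOO : Subsingleton (O.obj : Type u) := ⟨fun a b => rfl⟩
  haveI hOsub : Subsingleton ((F.obj O).obj : Type u) := by
    obtain ⟨-, hexO, -⟩ := hexact O O O (𝟙 O) (𝟙 O)
      (fun a b _ => Subsingleton.elim a b)
      (fun y => ⟨fun _ => ⟨y, Subsingleton.elim _ _⟩, fun _ => Subsingleton.elim _ _⟩)
      (fun y => ⟨y, rfl⟩)
    have hid : ∀ y, fdHom (F.map (𝟙 O)) y = y := by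
      intro y; rw [F.map_id]; rfl
    constructor
    intro a b
    have key : ∀ c : ((F.obj O).obj : Type u), c = 0 := by
      intro c
      have h1 : fdHom (F.map (𝟙 O)) c = 0 := (hexO c).mpr ⟨c, hid c⟩
      rwa [hid] at h1
    rw [key a, key b]
  -- F sends zero morphisms to zero morphisms
  have hzero : ∀ (P Q : fdMod K B) (m : P ⟶ Q), fdHom m = 0 →
      ∀ y, fdHom (F.map m) y = 0 := by
    intro P Q m hm y
    let a : P ⟶ O := ⟨(0 : P.obj ⟶ O.obj)⟩
    let b : O ⟶ Q := ⟨(0 : O.obj ⟶ Q.obj)⟩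
    have hmab : m = a ≫ b := by
      apply ObjectProperty.hom_ext; apply ModuleCat.hom_ext; apply LinearMap.ext
      intro x
      show fdHom m x = fdHom b (fdHom a x)
      rw [hm]
      rfl
    rw [hmab, F.map_comp]
    show fdHom (F.map b) (fdHom (F.map a) y) = 0
    rw [Subsingleton.elim (fdHom (F.map a) y) 0, map_zero]
  -- injectivity of f
  have hfinj : Function.Injective (fdHom f) := by
    rw [← LinearMap.ker_eq_bot (f := (fdHom f).hom)]
    let Kf : Submodule B Y.obj := LinearMap.ker (fdHom f).hom
    show Kf = ⊥
    haveI := Y.property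
    haveI hKffin : Module.Finite B Kf := Module.Finite.iff_fg.mpr (IsNoetherian.noetherian _)
    let Kffd : fdMod K B := ⟨ModuleCat.of B Kf, hKffin⟩
    let jm : Kffd ⟶ Y := ⟨ModuleCat.ofHom Kf.subtype⟩
    haveI hQfin : Module.Finite B (Y.obj ⧸ Kf) := inferInstance
    let Qf : fdMod K B := ⟨ModuleCat.of B (Y.obj ⧸ Kf), hQfin⟩
    let q : Y ⟶ Qf := ⟨ModuleCat.ofHom Kf.mkQ⟩
    have hex : Function.Exact (fdHom jm) (fdHom q) := by
      intro y
      constructor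
      · intro hy
        have : y ∈ Kf := (Submodule.Quotient.mk_eq_zero Kf).mp hy
        exact ⟨⟨y, this⟩, rfl⟩
      · rintro ⟨⟨x, hx⟩, rfl⟩
        exact (Submodule.Quotient.mk_eq_zero Kf).mpr hx
    obtain ⟨hjinj, -, -⟩ := hexact Kffd Y Qf jm q (Submodule.injective_subtype _)
      hex (Submodule.mkQ_surjective Kf)
    have hjf : fdHom (jm ≫ f) = 0 := by
      apply ModuleCat.hom_ext; apply LinearMap.ext
      intro x
      show fdHom f (fdHom jm x) = 0
      exact x.2
    have hFjm0 : ∀ y, fdHom (F.map jm) y = 0 := by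
      intro y
      have h1 : fdHom (F.map (jm ≫ f)) y = 0 := hzero _ _ _ hjf y
      rw [F.map_comp] at h1
      have h2 : fdHom (F.map f) (fdHom (F.map jm) y) = 0 := h1
      rw [← map_zero (fdHom (F.map f)).hom] at h2
      exact hFfinj h2
    have hjm0 : jm = (0 : Kffd ⟶ Y) := by
      apply hfaithful.map_injective
      apply ObjectProperty.hom_ext; apply ModuleCat.hom_ext; apply LinearMap.ext
      intro y
      rw [hFjm0 y]
      exact (hzero Kffd Y 0 rfl y).symm
    rw [Submodule.eq_bot_iff]
    intro x hx
    have : fdHom jm ⟨x, hx⟩ = (0 : Y.obj) := by rw [hjm0]; rfl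
    exact this
  -- the cokernel of f
  haveI := X.property
  haveI hZfin : Module.Finite B (X.obj ⧸ LinearMap.range (fdHom f).hom) := inferInstance
  let Zfd : fdMod K B := ⟨ModuleCat.of B (X.obj ⧸ LinearMap.range (fdHom f).hom), hZfin⟩
  let g : X ⟶ Zfd := ⟨ModuleCat.ofHom (LinearMap.range (fdHom f).hom).mkQ⟩
  have hexfg : Function.Exact (fdHom f) (fdHom g) := by
    intro y
    constructor
    · intro hy
      have : y ∈ LinearMap.range (fdHom f).hom := (Submodule.Quotient.mk_eq_zero _).mp hy
      exact this
    · intro hy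
      exact (Submodule.Quotient.mk_eq_zero _).mpr hy
  obtain ⟨-, hFex, hFgsurj⟩ := hexact Y X Zfd f g hfinj hexfg (Submodule.mkQ_surjective _)
  -- kernels agree
  have hker : LinearMap.ker (fdHom (F.map g)).hom = LinearMap.ker p' := by
    ext x
    rw [LinearMap.mem_ker]
    rw [hFex x]
    constructor
    · rintro ⟨y, rfl⟩
      rw [hcomp y]
      exact (fdHom e2.hom y).2
    · intro hx
      obtain ⟨y, hy⟩ := (hbij e2).2 (⟨x, hx⟩ : LinearMap.ker p')
      exact ⟨y, by rw [hcomp y, hy]; rfl⟩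
  -- identify F.obj Zfd with N
  let eq1 : ((F.obj X).obj ⧸ LinearMap.ker (fdHom (F.map g)).hom) ≃ₗ[A] (F.obj Zfd).obj :=
    LinearMap.quotKerEquivOfSurjective _ hFgsurj
  let eq2 : ((F.obj X).obj ⧸ LinearMap.ker p') ≃ₗ[A] N.obj :=
    LinearMap.quotKerEquivOfSurjective _ hp'surj
  let eqv : (F.obj Zfd).obj ≃ₗ[A] N.obj := eq1.symm.trans (hker ▸ eq2)
  refine ⟨Zfd, ⟨⟨⟨ModuleCat.ofHom eqv.toLinearMap⟩, ⟨ModuleCat.ofHom eqv.symm.toLinearMap⟩, ?_, ?_⟩⟩⟩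
  · apply ObjectProperty.hom_ext; apply ModuleCat.hom_ext; apply LinearMap.ext
    intro x
    exact eqv.symm_apply_apply x
  · apply ObjectProperty.hom_ext; apply ModuleCat.hom_ext; apply LinearMap.ext
    intro x
    exact eqv.apply_symm_apply x
end
end

section
/- Let A and B be finite dimensional self-injective algebras such that the stable module categories mod-bar(B) and mod-bar(A) are triangle equivalent. If A satisfies the Tachikawa conjecture, then so does B. -/
open CategoryTheory Limits Opposite

universe u

noncomputable section

variable (K : Type u) [Field K]

/-- The algebra `A` satisfies the Tachikawa conjecture: every finite dimensional
`A`-module with no self-extensions is projective. -/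
def SatisfiesTachikawa (A : Type u) [Ring A] [Algebra K A] : Prop :=
  ∀ (M : ModuleCat.{u} A), Module.Finite A M →
    (∀ i : ℕ, 0 < i → Subsingleton (ExtGrp K A i M M)) → Module.Projective A M

/-- `N` is a (first) syzygy of `M`: there is a projective cover `p : P → M`
(an epimorphism from a projective with superfluous kernel) with kernel `N`. -/
def IsSyzygyOf (A : Type u) [Ring A] (N M : ModuleCat.{u} A) : Prop :=
  ∃ (P : ModuleCat.{u} A) (p : P ⟶ M) (i : N ⟶ P),
    Module.Projective A P ∧ Function.Surjective p ∧
    (∀ L : Submodule A P, (∀ x : P, ∃ y ∈ L, p y = p x) → L = ⊤) ∧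
    Function.Injective i ∧ Function.Exact i p

/-- `HasSyzygyChain A M N d` says that `N ≅ Ω^d(M)`: there is a chain of `d`
successive syzygies starting at `M` and ending at a module isomorphic to `N`. -/
def HasSyzygyChain (A : Type u) [Ring A] (M N : ModuleCat.{u} A) (d : ℕ) : Prop :=
  ∃ C : ℕ → ModuleCat.{u} A, C 0 = M ∧ (∀ i < d, IsSyzygyOf A (C (i + 1)) (C i)) ∧
    Nonempty (C d ≅ N)

/-- The stable relation on `mod A`: two morphisms are identified if their difference
factors through a projective module. -/
def stableRel (A : Type u) [Ring A] [Algebra K A] : HomRel (fdMod K A) :=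
  fun {X Y} f g =>
    ∃ (P : ModuleCat.{u} A) (_ : Module.Projective A P)
      (u : X.obj ⟶ P) (v : P ⟶ Y.obj), fdHom f - fdHom g = u ≫ v

/-- The stable module category `mod-bar A` of the finite dimensional algebra `A`:
the quotient of `mod A` by the ideal of morphisms factoring through projectives. -/
def StableMod (A : Type u) [Ring A] [Algebra K A] :=
  CategoryTheory.Quotient (stableRel K A)

instance (A : Type u) [Ring A] [Algebra K A] : Category (StableMod K A) :=
  inferInstanceAs (Category (CategoryTheory.Quotient (stableRel K A)))

section StableTools

variable {R : Type u} [Ring R] [Algebra K R]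

lemma punit_projective : Module.Projective R PUnit.{u+1} :=
  Module.Projective.of_basis (Module.Basis.empty (R := R) (ι := PEmpty.{u+1}) PUnit.{u+1})

lemma projective_prod {M N : Type u} [AddCommGroup M] [Module R M] [AddCommGroup N]
    [Module R N] (hM : Module.Projective R M) (hN : Module.Projective R N) :
    Module.Projective R (M × N) := by
  obtain ⟨s, hs⟩ := Module.projective_def.mp hM
  obtain ⟨t, ht⟩ := Module.projective_def.mp hN
  exact Module.Projective.of_split
    (LinearMap.prodMap s t)
    (LinearMap.prodMap (Finsupp.linearCombination R id) (Finsupp.linearCombination R id))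
    (LinearMap.ext fun x => Prod.ext (hs x.1) (ht x.2))

variable {K}

lemma mc_comp_apply {X Y Z : ModuleCat.{u} R} (f : X ⟶ Y) (g : Y ⟶ Z) (x : X) :
    (f ≫ g) x = g (f x) := rfl

instance stableRel_congruence : Congruence (stableRel K R) where
  equivalence := by
    refine fun {X Y} => ⟨?_, ?_, ?_⟩
    · intro f
      exact ⟨ModuleCat.of R PUnit, punit_projective, 0, 0, by simp⟩
    · rintro f g ⟨P, hP, u, v, huv⟩
      refine ⟨P, hP, -u, v, ?_⟩
      have : fdHom g - fdHom f = -(fdHom f - fdHom g) := by abel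
      rw [this, huv]
      ext x
      show -(v (u x)) = v ((-u) x)
      exact (map_neg (ConcreteCategory.hom v) (ConcreteCategory.hom u x)).symm
    · rintro f g h ⟨P, hP, u, v, huv⟩ ⟨Q, hQ, u', v', huv'⟩
      refine ⟨ModuleCat.of R (P × Q), projective_prod hP hQ,
        ModuleCat.ofHom (LinearMap.prod u.hom u'.hom), ModuleCat.ofHom (LinearMap.coprod v.hom v'.hom), ?_⟩
      have : fdHom f - fdHom h = (fdHom f - fdHom g) + (fdHom g - fdHom h) := by abel
      rw [this, huv, huv']
      ext x
      show v (u x) + v' (u' x) = LinearMap.coprod v.hom v'.hom (LinearMap.prod u.hom u'.hom x)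
      simp
  comp_left := by
    rintro X Y Z f g g' ⟨P, hP, u, v, huv⟩
    refine ⟨P, hP, fdHom f ≫ u, v, ?_⟩
    have h1 : fdHom (f ≫ g) - fdHom (f ≫ g') = fdHom f ≫ (fdHom g - fdHom g') := rfl
    rw [h1, huv]
    rfl
  comp_right := by
    rintro X Y Z f f' g ⟨P, hP, u, v, huv⟩
    refine ⟨P, hP, u, v ≫ fdHom g, ?_⟩
    have h1 : fdHom (f ≫ g) - fdHom (f' ≫ g) = (fdHom f - fdHom f') ≫ fdHom g := by
      ext x
      exact (map_sub (fdHom g).hom _ _).symm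
    rw [h1, huv]
    rfl

lemma subsingleton_hom_of_fac {X Y : fdMod K R}
    (h : ∀ f : X.obj ⟶ Y.obj, ∃ (Q : ModuleCat.{u} R) (_ : Module.Projective R Q)
      (u : X.obj ⟶ Q) (v : Q ⟶ Y.obj), f = u ≫ v) :
    Subsingleton ((Quotient.functor (stableRel K R)).obj X ⟶
      (Quotient.functor (stableRel K R)).obj Y) := by
  constructor
  intro a b
  obtain ⟨f, rfl⟩ := (Quotient.functor (stableRel K R)).map_surjective a
  obtain ⟨g, rfl⟩ := (Quotient.functor (stableRel K R)).map_surjective b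
  rw [Quotient.functor_map_eq_iff]
  obtain ⟨Q, hQ, u, v, huv⟩ := h (fdHom f - fdHom g)
  exact ⟨Q, hQ, u, v, huv⟩

lemma fac_of_subsingleton_hom {X Y : fdMod K R}
    (h : Subsingleton ((Quotient.functor (stableRel K R)).obj X ⟶
      (Quotient.functor (stableRel K R)).obj Y))
    (f : X.obj ⟶ Y.obj) :
    ∃ (Q : ModuleCat.{u} R) (_ : Module.Projective R Q)
      (u : X.obj ⟶ Q) (v : Q ⟶ Y.obj), f = u ≫ v := by
  have : (Quotient.functor (stableRel K R)).map (show X ⟶ Y from ObjectProperty.homMk f) =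
      (Quotient.functor (stableRel K R)).map (show X ⟶ Y from ObjectProperty.homMk (0 : X.obj ⟶ Y.obj)) :=
    Subsingleton.elim _ _
  rw [Quotient.functor_map_eq_iff] at this
  obtain ⟨Q, hQ, u, v, huv⟩ := this
  refine ⟨Q, hQ, u, v, ?_⟩
  rw [← huv]
  show f = f - 0
  simp

end StableTools
section Resolution

lemma moduleCat_subsingleton_iff_isZero {S : Type u} [Ring S] (M : ModuleCat.{u} S) :
    Subsingleton M ↔ IsZero M := by
  constructor
  · intro h
    exact ModuleCat.isZero_of_subsingleton M
  · intro h
    have h0 : (𝟙 M : M ⟶ M) = 0 := h.eq_of_src _ _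
    have hz : ∀ x : M, x = 0 := by
      intro x
      calc x = (𝟙 M : M ⟶ M) x := rfl
        _ = (0 : M ⟶ M) x := by rw [h0]
        _ = 0 := rfl
    exact ⟨fun a b => by rw [hz a, hz b]⟩

variable {R : Type u} [Ring R] [Algebra K R]

variable {K} in
lemma extGrp_subsingleton_iff
    (C P : ℕ → ModuleCat.{u} R)
    (p : ∀ n, P n ⟶ C n) (i : ∀ n, C (n + 1) ⟶ P n)
    (hproj : ∀ n, Module.Projective R (P n))
    (hsurj : ∀ n, Function.Surjective (p n))
    (hinj : ∀ n, Function.Injective (i n))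
    (hex : ∀ n, Function.Exact (i n) (p n))
    (n : ℕ) (Y : ModuleCat.{u} R) :
    Subsingleton (ExtGrp K R (n + 1) (C 0) Y) ↔
      ∀ g : C (n + 1) ⟶ Y, ∃ h : P n ⟶ Y, i n ≫ h = g := by
  classical
  -- basic compositions
  have hz : ∀ m, i m ≫ p m = 0 := by
    intro m
    ext c
    exact (hex m).apply_apply_eq_zero c
  -- the chain complex
  set d : ∀ m, P (m + 1) ⟶ P m := fun m => p (m + 1) ≫ i m with hd_def
  have hdd : ∀ m, d (m + 1) ≫ d m = 0 := by
    intro m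
    show (p (m + 2) ≫ i (m + 1)) ≫ p (m + 1) ≫ i m = 0
    ext x
    show i m (p (m + 1) (i (m + 1) (p (m + 2) x))) = (0 : P (m + 2) ⟶ P m) x
    rw [(hex (m + 1)).apply_apply_eq_zero, map_zero]
    rfl
  set X : ChainComplex (ModuleCat.{u} R) ℕ := ChainComplex.of P d hdd with hX_def
  have hXd : ∀ m, X.d (m + 1) m = d m := fun m => ChainComplex.of_d _ _ _
  have hXproj : ∀ m, Projective (X.X m) := by
    intro m
    show Projective (P m)
    have := (IsProjective.iff_projective (R := R) (P := P m)).mp (hproj m)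
    exact this
  have hπd : X.d 1 0 ≫ p 0 = 0 := by
    rw [hXd 0]
    show (p 1 ≫ i 0) ≫ p 0 = 0
    ext x
    show p 0 (i 0 (p 1 x)) = (0 : P 1 ⟶ C 0) x
    rw [(hex 0).apply_apply_eq_zero]
    rfl
  set π : X ⟶ (ChainComplex.single₀ (ModuleCat.{u} R)).obj (C 0) :=
    (ChainComplex.toSingle₀Equiv X (C 0)).symm ⟨p 0, hπd⟩ with hπ_def
  have hπ0 : π.f 0 = p 0 := ChainComplex.toSingle₀Equiv_symm_apply_f_zero _ _
  have hexact : ∀ m, X.ExactAt (m + 1) := by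
    intro m
    rw [HomologicalComplex.exactAt_iff' _ (m + 2) (m + 1) m (by simp) (by simp)]
    have hf : (X.sc' (m + 2) (m + 1) m).f = X.d (m + 2) (m + 1) := rfl
    have hg : (X.sc' (m + 2) (m + 1) m).g = X.d (m + 1) m := rfl
    rw [ShortComplex.moduleCat_exact_iff]
    intro x₂ hx₂
    rw [hg, hXd m] at hx₂
    have hpx : p (m + 1) x₂ = 0 := by
      apply hinj m
      have : i m (p (m + 1) x₂) = 0 := hx₂
      rw [this, map_zero]
    obtain ⟨c, hc⟩ := ((hex (m + 1)) x₂).mp hpx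
    obtain ⟨z, hzz⟩ := hsurj (m + 2) c
    refine ⟨z, ?_⟩
    rw [hf, hXd (m + 1)]
    show i (m + 1) (p (m + 2) z) = x₂
    rw [hzz, hc]
  have hquasi : QuasiIso π := by
    constructor
    intro m
    cases m with
    | zero =>
      rw [ChainComplex.quasiIsoAt₀_iff, ShortComplex.quasiIso_iff_of_zeros' _ rfl rfl rfl]
      have hEx : (ShortComplex.mk (X.d 1 0) (p 0) hπd).Exact := by
        rw [ShortComplex.moduleCat_exact_iff]
        intro x hx
        have hx' : p 0 x = 0 := hx
        obtain ⟨c, hc⟩ := ((hex 0) x).mp hx'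
        obtain ⟨z, hzz⟩ := hsurj 1 c
        refine ⟨z, ?_⟩
        have h10 : X.d 1 0 z = i 0 (p 1 z) := by
          rw [hXd 0]; rfl
        rw [h10, hzz, hc]
      have hEpi : Epi (p 0) := (ModuleCat.epi_iff_surjective (p 0)).2 (hsurj 0)
      refine (ShortComplex.exact_and_epi_g_iff_of_iso ?_).2 ⟨hEx, hEpi⟩
      exact ShortComplex.isoMk (Iso.refl _) (Iso.refl _) (Iso.refl _)
        (by exact (Category.id_comp _).trans (Category.comp_id _).symm)
        (by exact (Category.id_comp _).trans (Category.comp_id _).symm)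
    | succ m =>
      rw [quasiIsoAt_iff_exactAt']
      · exact hexact m
      · apply ChainComplex.exactAt_succ_single_obj
  let res : ProjectiveResolution (C 0) :=
    { complex := X
      projective := hXproj
      π := π
      quasiIso := hquasi }
  -- Ext as homology of the Hom complex
  set L : CochainComplex (ModuleCat.{u} K) ℕ := X.linearYonedaObj K Y with hL_def
  have e : (ExtGrp K R (n + 1) (C 0) Y) ≅ L.homology (n + 1) := res.isoExt (n + 1) Y
  have key : Subsingleton (ExtGrp K R (n + 1) (C 0) Y) ↔ (L.sc' n (n + 1) (n + 2)).Exact := by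
    rw [moduleCat_subsingleton_iff_isZero]
    constructor
    · intro h
      have h2 : IsZero (L.homology (n + 1)) := h.of_iso e.symm
      rw [← HomologicalComplex.exactAt_iff_isZero_homology] at h2
      rw [← HomologicalComplex.exactAt_iff' _ n (n + 1) (n + 2) (by simp) (by simp)]
      exact h2
    · intro h
      rw [← HomologicalComplex.exactAt_iff' _ n (n + 1) (n + 2) (by simp) (by simp)] at h
      rw [HomologicalComplex.exactAt_iff_isZero_homology] at h
      exact h.of_iso e
  rw [key, ShortComplex.moduleCat_exact_iff]
  have hscf : (L.sc' n (n + 1) (n + 2)).f = L.d n (n + 1) := rfl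
  have hscg : (L.sc' n (n + 1) (n + 2)).g = L.d (n + 1) (n + 2) := rfl
  have hLd : ∀ a b, L.d a b = ModuleCat.ofHom (Linear.leftComp K Y (X.d b a)) :=
    fun a b => ChainComplex.linearYonedaObj_d X K Y a b
  constructor
  · -- exactness ⇒ extension property
    intro hE g
    have hker : (L.sc' n (n + 1) (n + 2)).g (show L.X (n+1) from (show X.X (n+1) ⟶ Y from p (n + 1) ≫ g)) = 0 := by
      rw [hscg, hLd]
      show X.d (n + 2) (n + 1) ≫ p (n + 1) ≫ g = 0
      rw [hXd (n + 1)]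
      show (p (n + 2) ≫ i (n + 1)) ≫ p (n + 1) ≫ g = 0
      rw [Category.assoc, ← Category.assoc (i (n + 1)), hz (n + 1)]
      simp
    obtain ⟨h, hh⟩ := hE _ hker
    have hh' : X.d (n + 1) n ≫ (show X.X n ⟶ Y from h) = p (n + 1) ≫ g := by
      rw [hscf, hLd] at hh
      exact hh
    rw [hXd n] at hh'
    refine ⟨h, ?_⟩
    ext c
    obtain ⟨x, hx⟩ := hsurj (n + 1) c
    have := congrArg (fun (q : P (n+1) ⟶ Y) => q x) hh'
    simp only [mc_comp_apply] at this ⊢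
    rw [← hx]
    exact this
  · -- extension property ⇒ exactness
    intro hext f0 hf
    set f : X.X (n + 1) ⟶ Y := f0 with hf0_def
    replace hf : (L.sc' n (n + 1) (n + 2)).g f = 0 := hf
    have hf' : X.d (n + 2) (n + 1) ≫ (show X.X (n+1) ⟶ Y from f) = 0 := by
      rw [hscg, hLd] at hf
      exact hf
    rw [hXd (n + 1)] at hf'
    -- f kills the image of i (n+1)
    have hif : i (n + 1) ≫ (show X.X (n+1) ⟶ Y from f) = 0 := by
      ext c
      obtain ⟨z, hzz⟩ := hsurj (n + 2) c
      have := congrArg (fun (q : P (n+2) ⟶ Y) => q z) hf'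
      simp only [mc_comp_apply] at this ⊢
      rw [← hzz]
      exact this
    -- factor f through C (n+1)
    set q : P (n + 1) ⟶ C (n + 1) := p (n + 1) with hq_def
    have hle : LinearMap.ker q.hom ≤ LinearMap.ker f.hom := by
      intro x hx
      have hx0 : q x = 0 := hx
      obtain ⟨c, hc⟩ := ((hex (n + 1)) x).mp hx0
      show f.hom x = 0
      rw [← hc]
      exact congrArg (fun (w : C (n+2) ⟶ Y) => w c) hif
    set g₀ := Submodule.liftQ (LinearMap.ker q.hom) f.hom hle
    set eq := q.hom.quotKerEquivOfSurjective (hsurj (n + 1))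
    set g : C (n + 1) ⟶ Y := ModuleCat.ofHom (g₀.comp (eq.symm : C (n+1) →ₗ[R] _)) with hg_def
    have hgq : ∀ x, g (q x) = f x := by
      intro x
      have h1 : eq.symm (q x) = Submodule.Quotient.mk x := by
        rw [LinearEquiv.symm_apply_eq]
        rfl
      show g₀ (eq.symm (q x)) = f x
      rw [h1]
      rfl
    obtain ⟨h, hh⟩ := hext g
    refine ⟨h, ?_⟩
    rw [hscf, hLd]
    show X.d (n + 1) n ≫ (show X.X n ⟶ Y from h) = f
    rw [hXd n]
    ext x
    show h (i n (q x)) = f x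
    have := congrArg (fun (w : C (n+1) ⟶ Y) => w (q x)) hh
    simp only [mc_comp_apply] at this
    rw [this]
    exact hgq x

end Resolution
section Cover

open Module

variable {R : Type u} [Ring R] [Algebra K R] [FiniteDimensional K R]

variable {K}

lemma cover_aux (M : ModuleCat.{u} R) :
    ∀ (d : ℕ) (V : Type u) [AddCommGroup V] [Module R V] [Module K V] [IsScalarTower K R V],
      FiniteDimensional K V → Module.Projective R V →
      ∀ (pr : V →ₗ[R] M), Function.Surjective pr → Module.finrank K V ≤ d →
      ∃ N : ModuleCat.{u} R, Module.Finite R N ∧ IsSyzygyOf R N M := by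
  intro d
  induction d using Nat.strong_induction_on with
  | _ d ih =>
  intro V _ _ _ _ hfd hproj pr hsur hrank
  by_cases hsup : ∀ L : Submodule R V, L ⊔ LinearMap.ker pr = ⊤ → L = ⊤
  · -- `pr` is already a projective cover: its kernel is the syzygy
    haveI : IsNoetherian K V := inferInstance
    haveI hNoeth : IsNoetherian R V := isNoetherian_of_tower K inferInstance
    refine ⟨ModuleCat.of R ↥(LinearMap.ker pr), ?_, ?_⟩
    · exact Module.Finite.iff_fg.mpr (IsNoetherian.noetherian _)
    · refine ⟨ModuleCat.of R V, ModuleCat.ofHom pr, ModuleCat.ofHom (LinearMap.ker pr).subtype, hproj, hsur, ?_, ?_, ?_⟩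
      · intro L hL
        apply hsup
        rw [eq_top_iff]
        intro x _
        obtain ⟨y0, hy, hpy⟩ := hL x
        set y : V := y0 with hy_def
        have hpy' : pr y = pr x := hpy
        have hxy : x - y ∈ LinearMap.ker pr := by
          rw [LinearMap.mem_ker, map_sub, hpy', sub_self]
        rw [Submodule.mem_sup]
        exact ⟨y, hy, x - y, hxy, by abel⟩
      · exact Subtype.coe_injective
      · intro v
        constructor
        · intro h
          exact ⟨⟨v, h⟩, rfl⟩
        · rintro ⟨⟨w, hw⟩, rfl⟩
          exact hw
  · push_neg at hsup
    obtain ⟨L, hL, hLne⟩ := hsup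
    -- the restriction of `pr` to `L` is surjective
    have hq : Function.Surjective (pr ∘ₗ L.subtype) := by
      intro m
      obtain ⟨x, hx⟩ := hsur m
      have hxmem : x ∈ L ⊔ LinearMap.ker pr := by rw [hL]; trivial
      obtain ⟨y, hy, z, hz, hyz⟩ := Submodule.mem_sup.mp hxmem
      refine ⟨⟨y, hy⟩, ?_⟩
      have : pr y = pr x := by
        rw [← hyz, map_add, (LinearMap.mem_ker.mp hz), add_zero]
      simpa [this] using hx
    haveI := hproj
    obtain ⟨fl, hfl⟩ := Module.projective_lifting_property (pr ∘ₗ L.subtype) pr hq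
    set e : V →ₗ[R] V := L.subtype ∘ₗ fl with he_def
    have hpe : ∀ x, pr (e x) = pr x := by
      intro x
      have := congrArg (fun (w : V →ₗ[R] M) => w x) hfl
      exact this
    have hrangee : ∀ x, e x ∈ L := fun x => (fl x).2
    haveI : IsArtinian K V := inferInstance
    haveI : IsNoetherian K V := inferInstance
    haveI : IsNoetherian R V := isNoetherian_of_tower K inferInstance
    haveI : IsArtinian R V := isArtinian_of_tower K inferInstance
    obtain ⟨n0, hn0⟩ := Filter.eventually_atTop.mp
      (LinearMap.eventually_isCompl_ker_pow_range_pow e)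
    set n : ℕ := max n0 1 with hn_def
    have hcompl := hn0 n (le_max_left _ _)
    set Rg : Submodule R V := LinearMap.range (e ^ n) with hRg_def
    have hRgL : Rg ≤ L := by
      rintro _ ⟨x, rfl⟩
      obtain ⟨m, hm⟩ := Nat.exists_eq_add_of_le (le_max_right n0 1)
      rw [show n = m + 1 by omega, pow_succ']
      exact hrangee _
    have hpen : ∀ (k : ℕ) (x), pr ((e ^ k) x) = pr x := by
      intro k
      induction k with
      | zero => intro x; rw [pow_zero]; rfl
      | succ k hk =>
        intro x
        rw [pow_succ, Module.End.mul_apply, hk, hpe]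
    -- Rg is a direct summand of V, hence projective
    set prj : V →ₗ[R] ↥Rg := Rg.linearProjOfIsCompl _ hcompl.symm with hprj_def
    have hsplit : prj ∘ₗ Rg.subtype = LinearMap.id := by
      ext x
      exact congrArg Subtype.val (Submodule.linearProjOfIsCompl_apply_left hcompl.symm x)
    have hprojR : Module.Projective R ↥Rg := Module.Projective.of_split Rg.subtype prj hsplit
    -- finite dimensionality of Rg over K
    set j : ↥Rg →ₗ[K] V := (Rg.subtype).restrictScalars K with hj_def
    have hjinj : Function.Injective j := Subtype.coe_injective
    haveI hfdR : FiniteDimensional K ↥Rg := FiniteDimensional.of_injective j hjinj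
    -- strict decrease of dimension
    have hlt : finrank K ↥Rg < finrank K V := by
      have hrange_lt : LinearMap.range j < ⊤ := by
        rw [SetLike.lt_iff_le_and_exists]
        refine ⟨le_top, ?_⟩
        obtain ⟨x, -, hx⟩ := SetLike.exists_of_lt (hLne.lt_top)
        refine ⟨x, trivial, ?_⟩
        rintro ⟨⟨y, hy⟩, rfl⟩
        exact hx (hRgL hy)
      have h1 : finrank K ↥Rg = finrank K ↥(LinearMap.range j) :=
        (LinearEquiv.ofInjective j hjinj).finrank_eq
      rw [h1]
      exact Submodule.finrank_lt hrange_lt.ne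
    -- recurse on the smaller cover
    exact ih (finrank K ↥Rg) (lt_of_lt_of_le hlt hrank) ↥Rg inferInstance hprojR
      (pr ∘ₗ Rg.subtype)
      (fun m => by
        obtain ⟨x, hx⟩ := hsur m
        exact ⟨⟨(e ^ n) x, ⟨x, rfl⟩⟩, by simpa [hpen n x] using hx⟩)
      le_rfl

include K in
lemma exists_syzygy (M : ModuleCat.{u} R) (hM : Module.Finite R M) :
    ∃ N : ModuleCat.{u} R, Module.Finite R N ∧ IsSyzygyOf R N M := by
  haveI := hM
  obtain ⟨m, pr, hsur⟩ := Module.Finite.exists_fin' R M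
  exact cover_aux M (finrank K (Fin m → R)) (Fin m → R) inferInstance
    (Module.Projective.of_basis (Pi.basisFun R (Fin m))) pr hsur le_rfl

end Cover
section Extend

variable {S : Type u} [Ring S]

lemma extend_along_injective_of_factor
    (hself : Injective (ModuleCat.of S S))
    {N P Y : ModuleCat.{u} S} (hN : Module.Finite S N)
    (iN : N ⟶ P) (hiN : Function.Injective iN) (g : N ⟶ Y)
    (Q : ModuleCat.{u} S) (hQ : Module.Projective S Q) (u : N ⟶ Q) (v : Q ⟶ Y)
    (hguv : g = u ≫ v) :
    ∃ w : P ⟶ Y, iN ≫ w = g := by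
  classical
  obtain ⟨s, hs⟩ := Module.projective_def.mp hQ
  obtain ⟨G, hG⟩ := hN.fg_top
  set w0 : N →ₗ[S] (Q →₀ S) := s ∘ₗ u.hom with hw0_def
  set T : Finset Q := G.biUnion (fun x => (w0 x).support) with hT_def
  set F : Submodule S (Q →₀ S) := Finsupp.supported S S (↑T : Set Q) with hF_def
  have hw0F : ∀ x : N, w0 x ∈ F := by
    have hle : LinearMap.range w0 ≤ F := by
      rw [LinearMap.range_eq_map, ← hG, Submodule.map_span_le]
      intro m hm
      rw [hF_def, Finsupp.mem_supported]
      intro q hq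
      simp only [Finset.mem_coe] at hq ⊢
      rw [hT_def]
      exact Finset.mem_biUnion.mpr ⟨m, hm, hq⟩
    intro x
    exact hle ⟨x, rfl⟩
  set u1 : N →ₗ[S] ↥F := w0.codRestrict F hw0F with hu1_def
  haveI : Finite ↥(↑T : Set Q) := inferInstance
  set E : ↥F ≃ₗ[S] (↥(↑T : Set Q) → S) :=
    (Finsupp.supportedEquivFinsupp (↑T : Set Q)).trans
      (Finsupp.linearEquivFunOnFinite S S ↥(↑T : Set Q)) with hE_def
  set v1 : ↥F →ₗ[S] Y := v.hom ∘ₗ (Finsupp.linearCombination S id) ∘ₗ F.subtype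
    with hv1_def
  have hv1u1 : ∀ x : N, v1 (u1 x) = g x := by
    intro x
    show v ((Finsupp.linearCombination S id) (w0 x)) = g x
    have : (Finsupp.linearCombination S (id : Q → Q)) (w0 x) = u x := hs (u x)
    rw [this, hguv]
    rfl
  -- extend componentwise using self-injectivity
  haveI : Injective (ModuleCat.of S S) := hself
  haveI : Mono iN := (ModuleCat.mono_iff_injective iN).mpr hiN
  set c : ↥(↑T : Set Q) → (N ⟶ ModuleCat.of S S) :=
    fun t => ModuleCat.ofHom ((LinearMap.proj t) ∘ₗ (E.toLinearMap ∘ₗ u1) : N →ₗ[S] S) with hc_def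
  set et : ↥(↑T : Set Q) → (P ⟶ ModuleCat.of S S) := fun t => Injective.factorThru (c t) iN
    with het_def
  have hetc : ∀ t, iN ≫ et t = c t := fun t => Injective.comp_factorThru (c t) iN
  set w1 : P →ₗ[S] (↥(↑T : Set Q) → S) := LinearMap.pi (fun t => (et t).hom)
    with hw1_def
  have hw1iN : ∀ x : N, w1 (iN x) = E (u1 x) := by
    intro x
    funext t
    have := congrArg (fun (q : N ⟶ ModuleCat.of S S) => q x) (hetc t)
    exact this
  refine ⟨ModuleCat.ofHom (v1 ∘ₗ (E.symm : (↥(↑T : Set Q) → S) →ₗ[S] ↥F) ∘ₗ w1 : P →ₗ[S] Y), ?_⟩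
  ext x
  show v1 (E.symm (w1 (iN x))) = g x
  rw [hw1iN x, LinearEquiv.symm_apply_apply]
  exact hv1u1 x

end Extend

/-- Let `A` and `B` be finite dimensional self-injective algebras whose
stable module categories are triangle equivalent.  If `A` satisfies the Tachikawa
conjecture, then so does `B`.

A triangle equivalence between the stable categories of self-injective algebras is
encoded as an equivalence of the stable categories which commutes with the syzygy
functor `Ω` (the inverse of the shift); this is expressed by the hypothesis `hψΩ`. -/
theorem tachikawa_stable_equivalence [IsAlgClosed K]
    (A B : Type u) [Ring A] [Algebra K A] [FiniteDimensional K A]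
    [Ring B] [Algebra K B] [FiniteDimensional K B]
    (hselfA : Injective (ModuleCat.of A A)) (hselfB : Injective (ModuleCat.of B B))
    (ψ : StableMod K B ≌ StableMod K A)
    (hψΩ : ∀ (M N : fdMod K B), IsSyzygyOf B N.obj M.obj →
      IsSyzygyOf A ((ψ.functor.obj ⟨N⟩).as.obj) ((ψ.functor.obj ⟨M⟩).as.obj))
    (hA : SatisfiesTachikawa K A) :
    SatisfiesTachikawa K B := by
  intro M hM hext
  classical
  -- the syzygy chain over B
  let Bc : ℕ → fdMod K B := fun n => Nat.rec (⟨M, hM⟩ : fdMod K B)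
    (fun _ prev => ⟨(exists_syzygy (K := K) prev.obj prev.property).choose,
      (exists_syzygy (K := K) prev.obj prev.property).choose_spec.1⟩) n
  have hBc : ∀ n, IsSyzygyOf B (Bc (n + 1)).obj (Bc n).obj := fun n =>
    (exists_syzygy (K := K) (Bc n).obj (Bc n).property).choose_spec.2
  -- data of the B-side chain
  let P : ℕ → ModuleCat.{u} B := fun n => (hBc n).choose
  let p : ∀ n, P n ⟶ (Bc n).obj := fun n => (hBc n).choose_spec.choose
  let i : ∀ n, (Bc (n + 1)).obj ⟶ P n := fun n => (hBc n).choose_spec.choose_spec.choose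
  have hPdata := fun n => (hBc n).choose_spec.choose_spec.choose_spec
  have hPproj : ∀ n, Module.Projective B (P n) := fun n => (hPdata n).1
  have hPsurj : ∀ n, Function.Surjective (p n) := fun n => (hPdata n).2.1
  have hPinj : ∀ n, Function.Injective (i n) := fun n => (hPdata n).2.2.2.1
  have hPex : ∀ n, Function.Exact (i n) (p n) := fun n => (hPdata n).2.2.2.2
  -- B-side: all maps Ω^{n+1} M ⟶ M extend, i.e. factor through projectives
  have hBext : ∀ n, ∀ g : (Bc (n + 1)).obj ⟶ M, ∃ h : P n ⟶ M, i n ≫ h = g := by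
    intro n
    have hsub : Subsingleton (ExtGrp K B (n + 1) ((Bc 0).obj) M) := hext (n + 1) (Nat.succ_pos n)
    exact (extGrp_subsingleton_iff (fun k => (Bc k).obj) P p i hPproj hPsurj hPinj hPex n M).mp
      hsub
  have hBsub : ∀ n, Subsingleton ((Quotient.functor (stableRel K B)).obj (Bc (n + 1)) ⟶
      (Quotient.functor (stableRel K B)).obj (Bc 0)) := by
    intro n
    apply subsingleton_hom_of_fac
    intro f
    obtain ⟨h, hh⟩ := hBext n f
    exact ⟨P n, hPproj n, i n, h, hh.symm⟩
  -- transfer to the A side through the equivalence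
  have hAsub : ∀ n, Subsingleton ((ψ.functor.obj ⟨Bc (n + 1)⟩) ⟶ (ψ.functor.obj ⟨Bc 0⟩)) := by
    intro n
    constructor
    intro a b
    obtain ⟨a', rfl⟩ := ψ.functor.map_surjective a
    obtain ⟨b', rfl⟩ := ψ.functor.map_surjective b
    exact congrArg _ (@Subsingleton.allEq _ (hBsub n) a' b')
  -- the syzygy chain over A
  let Ac : ℕ → fdMod K A := fun n => (ψ.functor.obj ⟨Bc n⟩).as
  have hAc : ∀ n, IsSyzygyOf A (Ac (n + 1)).obj (Ac n).obj := fun n =>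
    hψΩ (Bc n) (Bc (n + 1)) (hBc n)
  let P' : ℕ → ModuleCat.{u} A := fun n => (hAc n).choose
  let p' : ∀ n, P' n ⟶ (Ac n).obj := fun n => (hAc n).choose_spec.choose
  let i' : ∀ n, (Ac (n + 1)).obj ⟶ P' n := fun n => (hAc n).choose_spec.choose_spec.choose
  have hP'data := fun n => (hAc n).choose_spec.choose_spec.choose_spec
  have hP'proj : ∀ n, Module.Projective A (P' n) := fun n => (hP'data n).1
  have hP'surj : ∀ n, Function.Surjective (p' n) := fun n => (hP'data n).2.1
  have hP'inj : ∀ n, Function.Injective (i' n) := fun n => (hP'data n).2.2.2.1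
  have hP'ex : ∀ n, Function.Exact (i' n) (p' n) := fun n => (hP'data n).2.2.2.2
  -- A-side extension property
  have hAext : ∀ n, ∀ g : (Ac (n + 1)).obj ⟶ (Ac 0).obj, ∃ h : P' n ⟶ (Ac 0).obj,
      i' n ≫ h = g := by
    intro n g
    have hsub : Subsingleton ((Quotient.functor (stableRel K A)).obj (Ac (n + 1)) ⟶
        (Quotient.functor (stableRel K A)).obj (Ac 0)) := hAsub n
    obtain ⟨Q, hQ, u, v, huv⟩ := fac_of_subsingleton_hom hsub g
    exact extend_along_injective_of_factor hselfA ((Ac (n + 1)).property) (i' n) (hP'inj n)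
      g Q hQ u v huv
  -- Ext vanishing on the A side
  have hAExt : ∀ j : ℕ, 0 < j → Subsingleton (ExtGrp K A j ((Ac 0).obj) ((Ac 0).obj)) := by
    intro j hj
    obtain ⟨n, rfl⟩ : ∃ n, j = n + 1 := ⟨j - 1, by omega⟩
    exact (extGrp_subsingleton_iff (fun k => (Ac k).obj) P' p' i' hP'proj hP'surj hP'inj hP'ex
      n ((Ac 0).obj)).mpr (hAext n)
  -- A satisfies Tachikawa, so the image of M is projective
  have hAproj : Module.Projective A ((Ac 0).obj) := hA ((Ac 0).obj) ((Ac 0).property) hAExt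
  -- hence the endomorphisms of the image of M in the stable category are trivial
  have hAend : Subsingleton ((Quotient.functor (stableRel K A)).obj (Ac 0) ⟶
      (Quotient.functor (stableRel K A)).obj (Ac 0)) := by
    apply subsingleton_hom_of_fac
    intro f
    exact ⟨(Ac 0).obj, hAproj, f, 𝟙 _, (Category.comp_id f).symm⟩
  -- transfer back to B
  have hBend : Subsingleton ((Quotient.functor (stableRel K B)).obj (Bc 0) ⟶
      (Quotient.functor (stableRel K B)).obj (Bc 0)) := by
    constructor
    intro a b
    apply ψ.functor.map_injective
    exact @Subsingleton.allEq _ hAend _ _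
  -- conclude: the identity of M factors through a projective module
  obtain ⟨Q, hQ, u, v, huv⟩ := fac_of_subsingleton_hom hBend (𝟙 ((Bc 0).obj))
  haveI := hQ
  have hvu : v.hom ∘ₗ u.hom = LinearMap.id := congrArg ModuleCat.Hom.hom huv.symm
  exact Module.Projective.of_split u.hom v.hom hvu
end
end

section
/- Let A be a finite dimensional self-injective algebra satisfying the Tachikawa conjecture and F : mod(B) → mod(A) a homological embedding. Then F(B) is a projective A-module. -/
open CategoryTheory Limits Opposite

universe u

noncomputable section

variable (K : Type u) [Field K]

/-- Let `A` be a finite dimensional self-injective algebra satisfying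
the Tachikawa conjecture and `F : mod B → mod A` a homological embedding (fully
faithful, exact, inducing isomorphisms on all `Extⁱ`, `i > 0`).  Then `F(B)` is a
projective `A`-module. -/
theorem homological_embedding_image_of_ring_projective [IsAlgClosed K]
    (A B : Type u) [Ring A] [Algebra K A] [FiniteDimensional K A]
    [Ring B] [Algebra K B] [FiniteDimensional K B]
    (hself : Injective (ModuleCat.of A A))
    (htach : SatisfiesTachikawa K A)
    (F : fdMod K B ⥤ fdMod K A) (hfull : F.Full) (hfaithful : F.Faithful)
    (hexact : IsExactFunctor F)
    (hext : ∀ i : ℕ, 0 < i → ∀ X Y : fdMod K B,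
      Nonempty (ExtGrp K B i X.obj Y.obj ≅ ExtGrp K A i (F.obj X).obj (F.obj Y).obj)) :
    Module.Projective A (F.obj ⟨ModuleCat.of B B, by exact Module.Finite.self B⟩).obj := by
  set X : fdMod K B := ⟨ModuleCat.of B B, by exact Module.Finite.self B⟩
  refine htach _ (F.obj X).property ?_
  intro i hi
  obtain ⟨e⟩ := hext i hi X X
  have hproj : Projective X.obj :=
    (IsProjective.iff_projective (R := B) B).mp inferInstance
  obtain ⟨j, rfl⟩ := Nat.exists_eq_succ_of_ne_zero hi.ne'
  have hz : IsZero (ExtGrp K B (j + 1) X.obj X.obj) :=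
    isZero_Ext_succ_of_projective (R := K) (X := X.obj) (Y := X.obj) j
  have : Subsingleton (ExtGrp K B (j + 1) X.obj X.obj) := by
    have := hz.eq_of_src (𝟙 _) 0
    constructor
    intro a b
    have ha : (𝟙 (ExtGrp K B (j + 1) X.obj X.obj)) a = (0 : ExtGrp K B (j+1) X.obj X.obj ⟶ _) a := by rw [this]
    have hb : (𝟙 (ExtGrp K B (j + 1) X.obj X.obj)) b = (0 : ExtGrp K B (j+1) X.obj X.obj ⟶ _) b := by rw [this]
    simpa using ha.trans hb.symm
  exact Equiv.subsingleton.symm (e.toLinearEquiv.toEquiv)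
end
end

section
/- Let A be a finite dimensional self-injective algebra and F : mod(B) → mod(A) a fully faithful exact functor such that F(B) is a projective A-module. Then B is self-injective. -/
open CategoryTheory Limits Opposite

universe u

noncomputable section

variable (K : Type u) [Field K]

lemma Module.Injective.pi_fin {R : Type u} [Ring R] {Q : Type u} [AddCommGroup Q] [Module R Q]
    (h : Module.Injective R Q) (n : ℕ) : Module.Injective R (Fin n → Q) where
  out X Y _ _ _ _ f hf g := by
    choose H hH using fun i : Fin n => h.out f hf ((LinearMap.proj i).comp g)
    exact ⟨LinearMap.pi H, fun x => funext fun i => hH i x⟩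

lemma Module.Injective.of_retract {R : Type u} [Ring R] {Q : Type u} {M : Type u}
    [AddCommGroup Q] [Module R Q] [AddCommGroup M] [Module R M]
    (h : Module.Injective R Q) (s : M →ₗ[R] Q) (p : Q →ₗ[R] M) (hps : p.comp s = LinearMap.id) :
    Module.Injective R M where
  out X Y _ _ _ _ f hf g := by
    obtain ⟨H, hH⟩ := h.out f hf (s.comp g)
    refine ⟨p.comp H, fun x => ?_⟩
    have := hH x
    simp only [LinearMap.comp_apply] at this ⊢
    rw [this]
    exact congrArg (· (g x)) (congrArg DFunLike.coe hps)

lemma Module.Injective.of_projective_of_finite {R : Type u} [Ring R] {M : Type u}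
    [AddCommGroup M] [Module R M] [Module.Projective R M] [Module.Finite R M]
    (h : Module.Injective R R) : Module.Injective R M := by
  obtain ⟨n, f, hf⟩ := Module.Finite.exists_fin' R M
  obtain ⟨s, hs⟩ := Module.projective_lifting_property f LinearMap.id hf
  exact (h.pi_fin n).of_retract s f hs

set_option maxHeartbeats 1000000 in
/-- Let `A` be a finite dimensional self-injective algebra and
`F : mod B → mod A` a fully faithful exact functor such that `F(B)` is a projective
`A`-module.  Then `B` is self-injective. -/
theorem selfinjective_of_image_of_ring_projective [IsAlgClosed K]
    (A B : Type u) [Ring A] [Algebra K A] [FiniteDimensional K A]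
    [Ring B] [Algebra K B] [FiniteDimensional K B]
    (hself : Injective (ModuleCat.of A A))
    (F : fdMod K B ⥤ fdMod K A) (hfull : F.Full) (hfaithful : F.Faithful)
    (hexact : IsExactFunctor F)
    (hproj : Module.Projective A (F.obj ⟨ModuleCat.of B B, by exact Module.Finite.self B⟩).obj) :
    Injective (ModuleCat.of B B) := by
  have hAinj : Module.Injective A A := by
    haveI := hself
    exact Module.injective_module_of_injective_object A A
  haveI := hproj
  haveI : Module.Finite A (F.obj ⟨ModuleCat.of B B, by exact Module.Finite.self B⟩).obj :=
    (F.obj _).property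
  have hFBinj : Module.Injective A
      (F.obj ⟨ModuleCat.of B B, by exact Module.Finite.self B⟩).obj :=
    Module.Injective.of_projective_of_finite hAinj
  have baer : Module.Baer B B := by
    intro I g
    haveI hIfin : Module.Finite B ↥I := by
      haveI : Module.Finite K ↥I := by
        have : FiniteDimensional K ↥(I.restrictScalars K) := inferInstance
        exact this
      exact Module.Finite.of_restrictScalars_finite K B ↥I
    haveI hQfin : Module.Finite B (B ⧸ I) := Module.Finite.quotient B I
    let X : fdMod K B := ⟨ModuleCat.of B ↥I, hIfin⟩
    let Bobj : fdMod K B := ⟨ModuleCat.of B B, Module.Finite.self B⟩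
    let Z : fdMod K B := ⟨ModuleCat.of B (B ⧸ I), hQfin⟩
    let i : X ⟶ Bobj := ObjectProperty.homMk (ModuleCat.ofHom I.subtype)
    let pr : Bobj ⟶ Z := ObjectProperty.homMk (ModuleCat.ofHom I.mkQ)
    let gm : X ⟶ Bobj := ObjectProperty.homMk (ModuleCat.ofHom g)
    have hinj : Function.Injective (fdHom i) := Subtype.val_injective
    have hex : Function.Exact (fdHom i) (fdHom pr) := by
      intro y
      constructor
      · intro hy
        have : y ∈ I := (Submodule.Quotient.mk_eq_zero I).mp hy
        exact ⟨⟨y, this⟩, rfl⟩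
      · rintro ⟨⟨x, hx⟩, rfl⟩
        exact (Submodule.Quotient.mk_eq_zero I).mpr hx
    have hsurj : Function.Surjective (fdHom pr) := Submodule.mkQ_surjective I
    obtain ⟨hFinj, -, -⟩ := hexact X Bobj Z i pr hinj hex hsurj
    obtain ⟨h, hh⟩ := hFBinj.out (fdHom (F.map i)).hom hFinj (fdHom (F.map gm)).hom
    obtain ⟨h', hh'⟩ := hfull.map_surjective (ObjectProperty.homMk (ModuleCat.ofHom h) : F.obj Bobj ⟶ F.obj Bobj)
    have hcomp : i ≫ h' = gm := by
      apply hfaithful.map_injective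
      rw [F.map_comp, hh']
      ext x
      exact hh x
    exact ⟨(fdHom h').hom, fun x mem => congrArg (fun f : X ⟶ Bobj => fdHom f ⟨x, mem⟩) hcomp⟩
  haveI : Module.Injective B B := baer.injective
  exact Module.injective_object_of_injective_module B B
end
end

section
/- Let A be a finite dimensional self-injective algebra satisfying the Tachikawa conjecture and F : mod(B) → mod(A) a homological embedding. If B satisfies Ext_B^i(X,X)=0 for all i>0 for some module X, then X is projective; that is, B also satisfies the Tachikawa conjecture. -/
open CategoryTheory Limits Opposite

universe u

noncomputable section

variable (K : Type u) [Field K]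

namespace TachAux

open CategoryTheory.Projective

section Resolution

variable {C : Type*} [Category C] [Abelian C] [EnoughProjectives C]

/-- A projective resolution complex starting with a prescribed projective cover. -/
def resComplex {Q Z : C} (p : Q ⟶ Z) : ChainComplex C ℕ :=
  ChainComplex.mk' Q (Projective.syzygies p) (Projective.d p)
    (fun f => ⟨_, Projective.d f, by exact (Category.assoc _ _ _).trans ((congrArg _ (kernel.condition f)).trans comp_zero)⟩)

lemma resComplex_d_1_0 {Q Z : C} (p : Q ⟶ Z) :
    (resComplex p).d 1 0 = Projective.d p := by
  simp [resComplex]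

lemma resComplex_exactAt_succ {Q Z : C} (p : Q ⟶ Z) (n : ℕ) :
    (resComplex p).ExactAt (n + 1) := by
  rw [HomologicalComplex.exactAt_iff' _ (n + 1 + 1) (n + 1) n (by simp) (by simp)]
  refine ShortComplex.exact_of_iso ?_ (exact_d_f ((resComplex p).d (n + 1) n))
  refine ShortComplex.isoMk (ChainComplex.mk'XIso Q (Projective.syzygies p) (Projective.d p)
    (fun f => ⟨_, Projective.d f, by
      exact (Category.assoc _ _ _).trans ((congrArg _ (kernel.condition f)).trans comp_zero)⟩) n).symm
    (Iso.refl _) (Iso.refl _) ?_ ((Category.id_comp _).trans (Category.comp_id _).symm)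
  exact ((Iso.inv_comp_eq _).2 (ChainComplex.mk'_d _ _ _ _ n)).trans (Category.comp_id _).symm

instance resComplex_projective {Q Z : C} (p : Q ⟶ Z) [Projective Q] (n : ℕ) :
    Projective ((resComplex p).X n) := by
  obtain (_ | _ | _ | n) := n
  · exact ‹Projective Q›
  all_goals apply Projective.projective_over

/-- The projective resolution built on a prescribed projective cover. -/
def resOf {Q Z : C} (p : Q ⟶ Z) [Projective Q] [Epi p] : ProjectiveResolution Z where
  complex := resComplex p
  π := (ChainComplex.toSingle₀Equiv _ _).symm ⟨p, by
        rw [resComplex_d_1_0]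
        dsimp [Projective.d]
        exact (Category.assoc _ _ _).trans ((congrArg _ (kernel.condition p)).trans comp_zero)⟩
  quasiIso := ⟨fun n => by
    cases n
    · rw [ChainComplex.quasiIsoAt₀_iff, ShortComplex.quasiIso_iff_of_zeros']
      · refine (ShortComplex.exact_and_epi_g_iff_of_iso ?_).2
          ⟨exact_d_f p, by dsimp; infer_instance⟩
        exact ShortComplex.isoMk (Iso.refl _) (Iso.refl _) (Iso.refl _)
          ((Category.id_comp _).trans
            ((Category.comp_id ((resComplex p).d 1 0)).trans (resComplex_d_1_0 p)).symm)
          ((Category.id_comp _).trans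
            ((Category.comp_id _).trans (ChainComplex.toSingle₀Equiv_symm_apply_f_zero
              (C := resComplex p) (X := Z) p _)).symm)
      all_goals rfl
    · rw [quasiIsoAt_iff_exactAt']
      · apply resComplex_exactAt_succ
      · apply ChainComplex.exactAt_succ_single_obj⟩

end Resolution

end TachAux


namespace TachAux

variable {K : Type u} [Field K] {B : Type u} [Ring B] [Algebra K B]

lemma subsingleton_of_isZero {R : Type*} [Ring R] {M : ModuleCat R} (h : IsZero M) :
    Subsingleton M := by
  refine ⟨fun a b => ?_⟩
  have : (𝟙 M : M ⟶ M) = 0 := h.eq_of_src _ _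
  calc a = (𝟙 M : M ⟶ M) a := rfl
    _ = (0 : M ⟶ M) a := by rw [this]
    _ = (𝟙 M : M ⟶ M) b := by rw [this]; rfl
    _ = b := rfl

lemma exists_retraction {Q Z : ModuleCat.{u} B} (p : Q ⟶ Z) [Projective Q] [Epi p]
    (h : Subsingleton (((Ext K (ModuleCat.{u} B) 1).obj (op Z)).obj (kernel p))) :
    ∃ s : Q ⟶ kernel p, kernel.ι p ≫ s = 𝟙 (kernel p) := by
  let res := resOf p
  have h0 : IsZero (((resComplex p).linearYonedaObj K (kernel p)).homology 1) := by
    have hz : IsZero (((Ext K (ModuleCat.{u} B) 1).obj (op Z)).obj (kernel p)) :=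
      @ModuleCat.isZero_of_subsingleton _ _ _ h
    exact hz.of_iso (res.isoExt 1 (kernel p)).symm
  have hex := (HomologicalComplex.exactAt_iff_isZero_homology _ 1).2 h0
  rw [HomologicalComplex.exactAt_iff' _ 0 1 2 (by simp) (by simp)] at hex
  rw [ShortComplex.moduleCat_exact_iff] at hex
  let r : (resComplex p).X 1 ⟶ kernel p := Projective.π (kernel p)
  have hr : r ≫ kernel.ι p = (resComplex p).d 1 0 := (resComplex_d_1_0 p).symm
  have hc : ((resComplex p).linearYonedaObj K (kernel p)).d 1 2 r = 0 := by
    rw [ChainComplex.linearYonedaObj_d]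
    show (resComplex p).d 2 1 ≫ r = 0
    rw [← cancel_mono (kernel.ι p), Category.assoc]
    exact (congrArg _ hr).trans ((HomologicalComplex.d_comp_d _ _ _ _).trans zero_comp.symm)
  obtain ⟨s, hs⟩ := hex r hc
  replace hs : ((resComplex p).linearYonedaObj K (kernel p)).d 0 1 s = r := hs
  rw [ChainComplex.linearYonedaObj_d] at hs
  replace hs : (resComplex p).d 1 0 ≫ s = r := hs
  replace hs : r ≫ kernel.ι p ≫ s = r := (Category.assoc r (kernel.ι p) s).symm.trans
    ((congrArg (fun g : (resComplex p).X 1 ⟶ (resComplex p).X 0 => g ≫ s) hr).trans hs)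
  refine ⟨s, ?_⟩
  have : r ≫ (kernel.ι p ≫ s) = r ≫ 𝟙 (kernel p) := by rw [hs, Category.comp_id]
  exact (@cancel_epi _ _ _ _ _ r (Projective.π_epi (kernel p)) _ _).1 this

end TachAux

namespace TachAux

lemma exists_section {C : Type*} [Category C] [Abelian C] {Q Z : C} (p : Q ⟶ Z) [Epi p]
    (s : Q ⟶ kernel p) (hs : kernel.ι p ≫ s = 𝟙 (kernel p)) :
    ∃ σ : Z ⟶ Q, σ ≫ p = 𝟙 Z := by
  have hcolim := Abelian.epiIsCokernelOfKernel
    (KernelFork.ofι (kernel.ι p) (kernel.condition p)) (kernelIsKernel p)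
  have hg : kernel.ι p ≫ (𝟙 Q - s ≫ kernel.ι p) = 0 := by
    rw [Preadditive.comp_sub, Category.comp_id, ← Category.assoc, hs, Category.id_comp, sub_self]
  obtain ⟨σ, hσ⟩ := CokernelCofork.IsColimit.desc' hcolim (𝟙 Q - s ≫ kernel.ι p) hg
  have hσ' : p ≫ σ = 𝟙 Q - s ≫ kernel.ι p := hσ
  refine ⟨σ, (cancel_epi p).1 ?_⟩
  rw [← Category.assoc, hσ', Preadditive.sub_comp, Category.id_comp, Category.comp_id,
    Category.assoc, kernel.condition, comp_zero, sub_zero]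

end TachAux

theorem tachikawa_transfers_along_homological_embedding [IsAlgClosed K]
    (A B : Type u) [Ring A] [Algebra K A] [FiniteDimensional K A]
    [Ring B] [Algebra K B] [FiniteDimensional K B]
    (hself : Injective (ModuleCat.of A A))
    (htach : SatisfiesTachikawa K A)
    (F : fdMod K B ⥤ fdMod K A) (hfull : F.Full) (hfaithful : F.Faithful)
    (hexact : IsExactFunctor F)
    (hext : ∀ i : ℕ, 0 < i → ∀ X Y : fdMod K B,
      Nonempty (ExtGrp K B i X.obj Y.obj ≅ ExtGrp K A i (F.obj X).obj (F.obj Y).obj)) :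
    SatisfiesTachikawa K B := by
  
  intro M hM hExtM
  classical
  let X' : fdMod K B := ⟨M, hM⟩
  have hprojA : Module.Projective A ((F.obj X').obj) := by
    apply htach _ (F.obj X').property
    intro i hi
    obtain ⟨e⟩ := hext i hi X' X'
    exact (Equiv.subsingleton_congr e.toLinearEquiv.toEquiv).1 (hExtM i hi)
  have hFP : Projective ((F.obj X').obj) := (IsProjective.iff_projective _).1 hprojA
  obtain ⟨n, f, hf⟩ := Module.Finite.exists_fin' B M
  let p : ModuleCat.of B (Fin n → B) ⟶ M := ModuleCat.ofHom f
  haveI : Epi p := (ModuleCat.epi_iff_surjective p).2 hf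
  haveI : Projective (ModuleCat.of B (Fin n → B)) :=
    ModuleCat.projective_of_free (Pi.basisFun B (Fin n))
  haveI : IsNoetherian B ↑(ModuleCat.of B (Fin n → B)) :=
    show IsNoetherian B (Fin n → B) from
      isNoetherian_of_tower K (IsNoetherian.iff_fg.2 inferInstance)
  haveI hkfin : Module.Finite B ↥(LinearMap.ker p.hom) :=
    Module.Finite.iff_fg.2 (IsNoetherian.noetherian _)
  let N' : fdMod K B := ⟨ModuleCat.of B ↥(LinearMap.ker p.hom), hkfin⟩
  have hsub : Subsingleton (((Ext K (ModuleCat.{u} B) 1).obj (op M)).obj (kernel p)) := by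
    obtain ⟨e⟩ := hext 1 one_pos X' N'
    have hA : Subsingleton (ExtGrp K A 1 (F.obj X').obj (F.obj N').obj) :=
      TachAux.subsingleton_of_isZero
        (@isZero_Ext_succ_of_projective K _ _ _ _ _ _ _ _ hFP 0)
    have hB : Subsingleton (ExtGrp K B 1 M N'.obj) :=
      (Equiv.subsingleton_congr e.toLinearEquiv.toEquiv).2 hA
    have e2 := ((Ext K (ModuleCat.{u} B) 1).obj (op M)).mapIso (ModuleCat.kernelIsoKer p)
    exact (Equiv.subsingleton_congr e2.toLinearEquiv.toEquiv).2 hB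
  obtain ⟨s, hs⟩ := TachAux.exists_retraction p hsub
  obtain ⟨σ, hσ⟩ := TachAux.exists_section p s hs
  haveI : Module.Projective B ↑(ModuleCat.of B (Fin n → B)) :=
    show Module.Projective B (Fin n → B) from inferInstance
  exact Module.Projective.of_split σ.hom p.hom (by rw [← ModuleCat.hom_comp, hσ, ModuleCat.hom_id])
end
end
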